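/- Let n ≥ 1 be an integer and let k, D be reals with either k > 1 and D > 0, or 0 < k < 1 and D < 0; set c := D·log k (so c > 0). Then for every complex q with Re q > 0, ∫_0^∞ e^{−qt} · [ t^{−3/2}/(2√π (n−1)!) · ∫_c^∞ e^{−τ²/(4t)} τ (τ−c)^{n−1} dτ ] dt = e^{−c·q^{1/2}}/q^{n/2}, where q^{1/2} and q^{n/2} are taken with the principal branch of the square root; equivalently, this Laplace transform equals k^{−D·q^{1/2}}/q^{n/2}. -/

import Mathlib

open MeasureTheory Set Real

lemma surj_phi (a b y : ℝ) (ha : 0 < a) (hb : 0 < b) : ∃ x ∈ Set.Ioi (0:ℝ), a*x - b/x = y := by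
  set r := Real.sqrt (y^2 + 4*a*b) with hrdef
  have hr2 : r ^ 2 = y^2 + 4*a*b := Real.sq_sqrt (by nlinarith)
  have habs : |y| < r := by
    rw [hrdef, ← Real.sqrt_sq_eq_abs]
    exact Real.sqrt_lt_sqrt (sq_nonneg _) (by nlinarith)
  obtain ⟨h1, h2⟩ := abs_lt.mp habs
  set x := (y + r)/(2*a) with hxdef
  have hx0 : 0 < x := div_pos (by linarith) (by linarith)
  refine ⟨x, hx0, ?_⟩
  have key : a * x^2 = y * x + b := by
    rw [hxdef]
    field_simp
    ring_nf
    nlinarith [hr2]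
  have : b / x = a * x - y := by
    rw [div_eq_iff hx0.ne']; nlinarith [key]
  linarith [this]

lemma phi_hasDeriv (a b : ℝ) {x : ℝ} (hx : x ∈ Set.Ioi (0:ℝ)) :
    HasDerivAt (fun x => a*x - b/x) (a + b/x^2) x := by
  have h1 : HasDerivAt (fun x : ℝ => a*x - b/x) (a*1 - b * (-(x^2)⁻¹)) x := by
    have := ((hasDerivAt_id x).const_mul a).sub ((hasDerivAt_inv (ne_of_gt hx)).const_mul b)
    simpa [div_eq_mul_inv, Pi.sub_def] using this
  convert h1 using 1
  rw [mul_one, mul_neg, sub_neg_eq_add, div_eq_mul_inv]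

lemma phi_injOn (a b : ℝ) (ha : 0 < a) (hb : 0 < b) :
    Set.InjOn (fun x => a*x - b/x) (Set.Ioi (0:ℝ)) := by
  intro x hx y hy hxy
  simp only [Set.mem_Ioi] at hx hy
  have h : a*x - b/x = a*y - b/y := hxy
  rw [div_eq_mul_inv, div_eq_mul_inv] at h
  have h2 : (x - y) * (a*x*y + b) = 0 := by
    have hx' := hx.ne'
    have hy' := hy.ne'
    field_simp at h
    nlinarith [h]
  rcases mul_eq_zero.mp h2 with h3 | h3
  · linarith [sub_eq_zero.mp h3]
  · nlinarith [mul_pos (mul_pos ha hx) hy]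

lemma phi_image (a b : ℝ) (ha : 0 < a) (hb : 0 < b) :
    (fun x => a*x - b/x) '' (Set.Ioi (0:ℝ)) = Set.univ := by
  apply Set.eq_univ_of_forall
  intro y
  obtain ⟨x, hx, hxy⟩ := surj_phi a b y ha hb
  exact ⟨x, hx, hxy⟩

lemma gauss1 (a b : ℝ) (ha : 0 < a) (hb : 0 < b) :
    ∫ x in Set.Ioi (0:ℝ), (a + b/x^2) * Real.exp (-(a*x - b/x)^2) = Real.sqrt Real.pi := by
  have key := integral_image_eq_integral_abs_deriv_smul (measurableSet_Ioi (a := (0:ℝ)))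
    (fun x hx => (phi_hasDeriv a b hx).hasDerivWithinAt) (phi_injOn a b ha hb)
    (fun y => Real.exp (-y^2))
  rw [phi_image a b ha hb] at key
  have h1 : ∫ y in Set.univ, Real.exp (-y^2) = Real.sqrt Real.pi := by
    rw [MeasureTheory.setIntegral_univ]
    simpa using integral_gaussian 1
  rw [h1] at key
  rw [key]
  apply MeasureTheory.setIntegral_congr_fun measurableSet_Ioi
  intro x hx
  simp only [Set.mem_Ioi] at hx
  have h4 : 0 < a + b/x^2 := by positivity
  simp [abs_of_pos h4, smul_eq_mul]

lemma gauss1_int (a b : ℝ) (ha : 0 < a) (hb : 0 < b) :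
    MeasureTheory.IntegrableOn (fun x => (a + b/x^2) * Real.exp (-(a*x - b/x)^2))
      (Set.Ioi (0:ℝ)) := by
  have key := (integrableOn_image_iff_integrableOn_abs_deriv_smul
    (measurableSet_Ioi (a := (0:ℝ)))
    (fun x hx => (phi_hasDeriv a b hx).hasDerivWithinAt) (phi_injOn a b ha hb)
    (fun y => Real.exp (-y^2))).mp
  rw [phi_image a b ha hb] at key
  have h2 : MeasureTheory.IntegrableOn (fun y => Real.exp (-y^2)) Set.univ := by
    rw [MeasureTheory.integrableOn_univ]
    simpa using integrable_exp_neg_mul_sq (one_pos)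
  have := key h2
  apply this.congr_fun ?_ measurableSet_Ioi
  intro x hx
  simp only [Set.mem_Ioi] at hx
  have h3 : 0 < a + b/x^2 := by positivity
  simp [abs_of_pos h3, smul_eq_mul]

section part2
variable (a b : ℝ)

lemma psi_hasDeriv {x : ℝ} (hx : 0 < x) :
    HasDerivAt (fun x => a*x + b/x) (a - b/x^2) x := by
  have h1 : HasDerivAt (fun x : ℝ => a*x + b/x) (a*1 + b * (-(x^2)⁻¹)) x := by
    have := ((hasDerivAt_id x).const_mul a).add ((hasDerivAt_inv (ne_of_gt hx)).const_mul b)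
    simpa [div_eq_mul_inv, Pi.add_def] using this
  convert h1 using 1
  rw [mul_one, mul_neg, ← sub_eq_add_neg, div_eq_mul_inv]

variable (ha : 0 < a) (hb : 0 < b)
include ha hb

lemma psi_factor {x y : ℝ} (hx : 0 < x) (hy : 0 < y) (h : a*x + b/x = a*y + b/y) :
    (x - y) * (a*x*y - b) = 0 := by
  have hx' := hx.ne'
  have hy' := hy.ne'
  rw [div_eq_mul_inv, div_eq_mul_inv] at h
  field_simp at h
  nlinarith [h]

lemma psi_injOn_left :
    Set.InjOn (fun x => a*x + b/x) (Set.Ioc (0:ℝ) (Real.sqrt (b/a))) := by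
  intro x hx y hy hxy
  obtain ⟨hx1, hx2⟩ := hx
  obtain ⟨hy1, hy2⟩ := hy
  have hx0 : Real.sqrt (b/a) ^ 2 = b/a := Real.sq_sqrt (by positivity)
  rcases mul_eq_zero.mp (psi_factor a b ha hb hx1 hy1 hxy) with h3 | h3
  · linarith [sub_eq_zero.mp h3]
  · have hxyeq : x * y = Real.sqrt (b/a) ^ 2 := by
      rw [hx0, eq_div_iff ha.ne']; linear_combination h3
    have hs0 : 0 < Real.sqrt (b/a) := Real.sqrt_pos.mpr (by positivity)
    have hx3 : x = Real.sqrt (b/a) := by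
      apply le_antisymm hx2
      nlinarith [mul_le_mul_of_nonneg_left hy2 hx1.le]
    have hy3 : y = Real.sqrt (b/a) := by
      apply le_antisymm hy2
      nlinarith [mul_le_mul_of_nonneg_left hx2 hy1.le]
    rw [hx3, hy3]

lemma psi_injOn_right :
    Set.InjOn (fun x => a*x + b/x) (Set.Ioi (Real.sqrt (b/a))) := by
  intro x hx y hy hxy
  simp only [Set.mem_Ioi] at hx hy
  have hx0 : Real.sqrt (b/a) ^ 2 = b/a := Real.sq_sqrt (by positivity)
  have hs0 : 0 ≤ Real.sqrt (b/a) := Real.sqrt_nonneg _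
  have hx1 : 0 < x := lt_of_le_of_lt hs0 hx
  have hy1 : 0 < y := lt_of_le_of_lt hs0 hy
  rcases mul_eq_zero.mp (psi_factor a b ha hb hx1 hy1 hxy) with h3 | h3
  · linarith [sub_eq_zero.mp h3]
  · exfalso
    have : b / a < x * y := by nlinarith
    rw [div_lt_iff₀ ha] at this
    nlinarith

lemma psi_image_left :
    (fun x => a*x + b/x) '' (Set.Ioc (0:ℝ) (Real.sqrt (b/a)))
      = Set.Ici (2 * Real.sqrt (a*b)) := by
  have hs2 : Real.sqrt (a*b) ^ 2 = a*b := Real.sq_sqrt (by positivity)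
  have hs0 : 0 < Real.sqrt (a*b) := Real.sqrt_pos.mpr (by positivity)
  have hx0sq : Real.sqrt (b/a) ^ 2 = b/a := Real.sq_sqrt (by positivity)
  have hax0 : a * Real.sqrt (b/a) = Real.sqrt (a*b) := by
    rw [← Real.sqrt_sq ha.le, ← Real.sqrt_mul (by positivity)]
    congr 1
    field_simp
    rw [Real.sq_sqrt (by positivity)]
  apply Set.Subset.antisymm
  · rintro _ ⟨x, ⟨hx1, hx2⟩, rfl⟩
    simp only [Set.mem_Ici]
    rw [← sub_nonneg]
    have : a*x + b/x - 2 * Real.sqrt (a*b) = (a*x^2 - 2*Real.sqrt (a*b)*x + b)/x := by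
      field_simp; ring
    rw [this]
    apply div_nonneg _ hx1.le
    nlinarith [sq_nonneg (a*x - Real.sqrt (a*b))]
  · intro y hy
    simp only [Set.mem_Ici] at hy
    set s := Real.sqrt (a*b) with hsdef
    set r := Real.sqrt (y^2 - 4*a*b) with hrdef
    have hy0 : 0 < y := lt_of_lt_of_le (by positivity) hy
    have hr2 : r ^ 2 = y^2 - 4*a*b := Real.sq_sqrt (by nlinarith)
    have hr0 : 0 ≤ r := Real.sqrt_nonneg _
    have hry : r < y := by nlinarith
    set x := (y - r)/(2*a) with hxdef
    have hx0 : 0 < x := div_pos (by linarith) (by linarith)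
    have key : a * x^2 = y * x - b := by
      rw [hxdef]; field_simp; nlinarith [hr2]
    refine ⟨x, ⟨hx0, ?_⟩, ?_⟩
    · -- x ≤ √(b/a) ⇔ y - r ≤ 2s
      have h1 : y - 2*s ≤ r := by nlinarith
      rw [hxdef, div_le_iff₀ (by linarith)]
      calc y - r ≤ 2*s := by linarith
        _ = Real.sqrt (b/a) * (2*a) := by rw [← hax0]; ring
    · have hbx : b / x = y - a*x := by
        rw [div_eq_iff hx0.ne']; nlinarith [key]
      simp only
      rw [hbx]; ring

lemma psi_image_right :
    (fun x => a*x + b/x) '' (Set.Ioi (Real.sqrt (b/a)))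
      = Set.Ioi (2 * Real.sqrt (a*b)) := by
  have hs2 : Real.sqrt (a*b) ^ 2 = a*b := Real.sq_sqrt (by positivity)
  have hs0 : 0 < Real.sqrt (a*b) := Real.sqrt_pos.mpr (by positivity)
  have hx0sq : Real.sqrt (b/a) ^ 2 = b/a := Real.sq_sqrt (by positivity)
  have hx00 : 0 < Real.sqrt (b/a) := Real.sqrt_pos.mpr (by positivity)
  have hax0 : a * Real.sqrt (b/a) = Real.sqrt (a*b) := by
    rw [← Real.sqrt_sq ha.le, ← Real.sqrt_mul (by positivity)]
    congr 1
    field_simp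
    rw [Real.sq_sqrt (by positivity)]
  apply Set.Subset.antisymm
  · rintro _ ⟨x, hx, rfl⟩
    simp only [Set.mem_Ioi] at hx ⊢
    have hx1 : 0 < x := lt_trans hx00 hx
    have : a*x + b/x - 2 * Real.sqrt (a*b) = (a*x^2 - 2*Real.sqrt (a*b)*x + b)/x := by
      field_simp; ring
    rw [← sub_pos, this]
    apply div_pos _ hx1
    have h5 : Real.sqrt (a*b) < a*x := by
      rw [← hax0]; exact (mul_lt_mul_iff_right₀ ha).mpr hx
    nlinarith [mul_pos (sub_pos.mpr h5) (sub_pos.mpr h5)]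
  · intro y hy
    simp only [Set.mem_Ioi] at hy
    set s := Real.sqrt (a*b) with hsdef
    set r := Real.sqrt (y^2 - 4*a*b) with hrdef
    have hy0 : 0 < y := lt_trans (by positivity) hy
    have hr2 : r ^ 2 = y^2 - 4*a*b := Real.sq_sqrt (by nlinarith)
    have hr0 : 0 ≤ r := Real.sqrt_nonneg _
    set x := (y + r)/(2*a) with hxdef
    have hx0 : 0 < x := div_pos (by linarith) (by linarith)
    have key : a * x^2 = y * x - b := by
      rw [hxdef]; field_simp; nlinarith [hr2]
    refine ⟨x, ?_, ?_⟩
    · simp only [Set.mem_Ioi]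
      rw [hxdef, lt_div_iff₀ (by linarith)]
      calc Real.sqrt (b/a) * (2*a) = 2*s := by rw [← hax0]; ring
        _ < y + r := by linarith
    · have hbx : b / x = y - a*x := by
        rw [div_eq_iff hx0.ne']; nlinarith [key]
      simp only
      rw [hbx]; ring


omit ha hb in
lemma sq_psi_eq (a b : ℝ) {x : ℝ} (hx : x ≠ 0) :
    (a*x + b/x)^2 - 4*(a*b) = (a*x - b/x)^2 := by
  field_simp
  ring

lemma gauss2_pieces :
    (∫ x in Set.Ioc (0:ℝ) (Real.sqrt (b/a)), (a - b/x^2) * Real.exp (-(a*x - b/x)^2)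
       = - ∫ y in Set.Ici (2 * Real.sqrt (a*b)), Real.exp (-(y^2 - 4*(a*b))))
    ∧ (∫ x in Set.Ioi (Real.sqrt (b/a)), (a - b/x^2) * Real.exp (-(a*x - b/x)^2)
       = ∫ y in Set.Ioi (2 * Real.sqrt (a*b)), Real.exp (-(y^2 - 4*(a*b))))
    ∧ MeasureTheory.IntegrableOn
        (fun x => (a - b/x^2) * Real.exp (-(a*x - b/x)^2)) (Set.Ioc (0:ℝ) (Real.sqrt (b/a)))
    ∧ MeasureTheory.IntegrableOn
        (fun x => (a - b/x^2) * Real.exp (-(a*x - b/x)^2)) (Set.Ioi (Real.sqrt (b/a))) := by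
  have hx00 : 0 < Real.sqrt (b/a) := Real.sqrt_pos.mpr (by positivity)
  have hx0sq : Real.sqrt (b/a) ^ 2 = b/a := Real.sq_sqrt (by positivity)
  set g : ℝ → ℝ := fun y => Real.exp (-(y^2 - 4*(a*b))) with hgdef
  have hgInt : MeasureTheory.Integrable g := by
    have h : g = fun y => Real.exp (4*(a*b)) * Real.exp (-(1:ℝ)*y^2) := by
      funext y; simp only [hgdef]; rw [← Real.exp_add]; congr 1; ring
    rw [h]
    exact (integrable_exp_neg_mul_sq one_pos).const_mul _
  have hL := integral_image_eq_integral_abs_deriv_smul (measurableSet_Ioc)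
    (f := fun x => a*x + b/x) (f' := fun x => a - b/x^2)
    (fun x hx => (psi_hasDeriv a b hx.1).hasDerivWithinAt)
    (psi_injOn_left a b ha hb) g
  have hR := integral_image_eq_integral_abs_deriv_smul (measurableSet_Ioi)
    (f := fun x => a*x + b/x) (f' := fun x => a - b/x^2)
    (fun x hx => (psi_hasDeriv a b (lt_trans hx00 hx)).hasDerivWithinAt)
    (psi_injOn_right a b ha hb) g
  rw [psi_image_left a b ha hb] at hL
  rw [psi_image_right a b ha hb] at hR
  have hLe : ∀ x ∈ Set.Ioc (0:ℝ) (Real.sqrt (b/a)),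
      |a - b/x^2| • g (a*x + b/x) = -((a - b/x^2) * Real.exp (-(a*x - b/x)^2)) := by
    intro x hx
    obtain ⟨hx1, hx2⟩ := hx
    have hxb : a - b/x^2 ≤ 0 := by
      rw [sub_nonpos, le_div_iff₀ (by positivity)]
      nlinarith [mul_le_mul_of_nonneg_left (mul_self_le_mul_self hx1.le hx2) ha.le, hx0sq, div_mul_cancel₀ b ha.ne']
    rw [abs_of_nonpos hxb, smul_eq_mul, show g (a*x+b/x) = Real.exp (-(a*x - b/x)^2) by
      simp only [hgdef]; rw [sq_psi_eq a b hx1.ne']]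
    ring
  have hRe : ∀ x ∈ Set.Ioi (Real.sqrt (b/a)),
      |a - b/x^2| • g (a*x + b/x) = (a - b/x^2) * Real.exp (-(a*x - b/x)^2) := by
    intro x hx
    simp only [Set.mem_Ioi] at hx
    have hx1 : 0 < x := lt_trans hx00 hx
    have hxb : 0 ≤ a - b/x^2 := by
      rw [sub_nonneg, div_le_iff₀ (by positivity)]
      nlinarith [mul_le_mul_of_nonneg_left (mul_self_le_mul_self hx00.le hx.le) ha.le, hx0sq, div_mul_cancel₀ b ha.ne']
    rw [abs_of_nonneg hxb, smul_eq_mul, show g (a*x+b/x) = Real.exp (-(a*x - b/x)^2) by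
      simp only [hgdef]; rw [sq_psi_eq a b hx1.ne']]
  have hIntL := (integrableOn_image_iff_integrableOn_abs_deriv_smul (measurableSet_Ioc)
    (f := fun x => a*x + b/x) (f' := fun x => a - b/x^2)
    (fun x hx => (psi_hasDeriv a b hx.1).hasDerivWithinAt)
    (psi_injOn_left a b ha hb) g).mp (by rw [psi_image_left a b ha hb]; exact hgInt.integrableOn)
  have hIntR := (integrableOn_image_iff_integrableOn_abs_deriv_smul (measurableSet_Ioi)
    (f := fun x => a*x + b/x) (f' := fun x => a - b/x^2)
    (fun x hx => (psi_hasDeriv a b (lt_trans hx00 hx)).hasDerivWithinAt)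
    (psi_injOn_right a b ha hb) g).mp (by rw [psi_image_right a b ha hb]; exact hgInt.integrableOn)
  refine ⟨?_, ?_, ?_, ?_⟩
  · rw [hL, ← MeasureTheory.integral_neg]
    exact MeasureTheory.setIntegral_congr_fun measurableSet_Ioc
      (fun x hx => by rw [hLe x hx]; ring)
  · rw [hR]
    exact (MeasureTheory.setIntegral_congr_fun measurableSet_Ioi (fun x hx => hRe x hx)).symm
  · refine MeasureTheory.IntegrableOn.congr_fun hIntL.neg ?_ measurableSet_Ioc
    intro x hx
    simp only [Pi.neg_apply]
    rw [hLe x hx]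
    ring
  · exact MeasureTheory.IntegrableOn.congr_fun hIntR (fun x hx => hRe x hx) measurableSet_Ioi

lemma gauss2 :
    ∫ x in Set.Ioi (0:ℝ), (a - b/x^2) * Real.exp (-(a*x - b/x)^2) = 0 := by
  obtain ⟨hL, hR, hIL, hIR⟩ := gauss2_pieces a b ha hb
  have hx00 : 0 < Real.sqrt (b/a) := Real.sqrt_pos.mpr (by positivity)
  have hsplit : Set.Ioc (0:ℝ) (Real.sqrt (b/a)) ∪ Set.Ioi (Real.sqrt (b/a)) = Set.Ioi 0 :=
    Set.Ioc_union_Ioi_eq_Ioi hx00.le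
  rw [← hsplit, MeasureTheory.setIntegral_union (Set.Ioc_disjoint_Ioi le_rfl)
    measurableSet_Ioi hIL hIR, hL, hR, MeasureTheory.integral_Ici_eq_integral_Ioi]
  ring

lemma gauss2_int :
    MeasureTheory.IntegrableOn (fun x => (a - b/x^2) * Real.exp (-(a*x - b/x)^2))
      (Set.Ioi (0:ℝ)) := by
  obtain ⟨_, _, hIL, hIR⟩ := gauss2_pieces a b ha hb
  have hx00 : 0 < Real.sqrt (b/a) := Real.sqrt_pos.mpr (by positivity)
  have hsplit : Set.Ioc (0:ℝ) (Real.sqrt (b/a)) ∪ Set.Ioi (Real.sqrt (b/a)) = Set.Ioi 0 :=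
    Set.Ioc_union_Ioi_eq_Ioi hx00.le
  rw [← hsplit]
  exact hIL.union hIR

end part2

section part3
variable (a b : ℝ) (ha : 0 < a) (hb : 0 < b)
include ha hb

lemma coreJ_eq : ∀ x ∈ Set.Ioi (0:ℝ),
    (1/x^2) * Real.exp (-(a^2*x^2 + b^2/x^2))
      = (Real.exp (-(2*(a*b)))/(2*b)) *
        ((a + b/x^2) * Real.exp (-(a*x - b/x)^2) - (a - b/x^2) * Real.exp (-(a*x - b/x)^2)) := by
  intro x hx
  simp only [Set.mem_Ioi] at hx
  have hexp : -(a^2*x^2 + b^2/x^2) = -((a*x - b/x)^2) + -(2*(a*b)) := by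
    field_simp
    ring
  rw [hexp, Real.exp_add]
  field_simp
  ring

lemma coreJ :
    ∫ x in Set.Ioi (0:ℝ), (1/x^2) * Real.exp (-(a^2*x^2 + b^2/x^2))
      = Real.sqrt Real.pi / (2*b) * Real.exp (-(2*(a*b))) := by
  rw [MeasureTheory.setIntegral_congr_fun measurableSet_Ioi (coreJ_eq a b ha hb)]
  rw [MeasureTheory.integral_const_mul,
    MeasureTheory.integral_sub (gauss1_int a b ha hb) (gauss2_int a b ha hb),
    gauss1 a b ha hb, gauss2 a b ha hb]
  ring

lemma coreJ_int :
    MeasureTheory.IntegrableOn (fun x => (1/x^2) * Real.exp (-(a^2*x^2 + b^2/x^2)))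
      (Set.Ioi (0:ℝ)) := by
  have h := (((gauss1_int a b ha hb).sub (gauss2_int a b ha hb)).const_mul
    (Real.exp (-(2*(a*b)))/(2*b)))
  exact MeasureTheory.IntegrableOn.congr_fun h (fun x hx => (coreJ_eq a b ha hb x hx).symm)
    measurableSet_Ioi

end part3

section part4

lemma sq_hasDeriv (x : ℝ) : HasDerivAt (fun x : ℝ => x^2) (2*x) x := by
  simpa using hasDerivAt_pow 2 x

lemma sq_injOn : Set.InjOn (fun x : ℝ => x^2) (Set.Ioi 0) := by
  intro x hx y hy h
  simp only [Set.mem_Ioi] at hx hy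
  simp only at h
  nlinarith [h]

lemma sq_image : (fun x : ℝ => x^2) '' (Set.Ioi 0) = Set.Ioi 0 := by
  apply Set.Subset.antisymm
  · rintro _ ⟨x, hx, rfl⟩
    simp only [Set.mem_Ioi] at hx ⊢
    positivity
  · intro y hy
    simp only [Set.mem_Ioi] at hy
    exact ⟨Real.sqrt y, Real.sqrt_pos.mpr hy, Real.sq_sqrt hy.le⟩

lemma tkernel_eq (s τ : ℝ) (hs : 0 < s) (hτ : 0 < τ) : ∀ x ∈ Set.Ioi (0:ℝ),
    |2*x| • ((x^2) ^ (-(3:ℝ)/2) * Real.exp (-(s*(x^2)) - τ^2/(4*(x^2))))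
      = 2 * ((1/x^2) * Real.exp (-((Real.sqrt s)^2*x^2 + (τ/2)^2/x^2))) := by
  intro x hx
  simp only [Set.mem_Ioi] at hx
  have h1 : ((x^2 : ℝ)) ^ (-(3:ℝ)/2) = (x^3)⁻¹ := by
    rw [← Real.rpow_natCast x 2, ← Real.rpow_mul hx.le,
      show ((2:ℕ):ℝ) * (-(3)/2) = -3 by norm_num, Real.rpow_neg hx.le]
    congr 1
    rw [← Real.rpow_natCast x 3]
    norm_num
  rw [h1, abs_of_pos (by positivity), smul_eq_mul, Real.sq_sqrt hs.le]
  have h2 : -(s*x^2) - τ^2/(4*x^2) = -(s*x^2 + (τ/2)^2/x^2) := by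
    field_simp
    ring
  rw [h2]
  field_simp

lemma lapkernel (s τ : ℝ) (hs : 0 < s) (hτ : 0 < τ) :
    ∫ t in Set.Ioi (0:ℝ), t ^ (-(3:ℝ)/2) * Real.exp (-(s*t) - τ^2/(4*t))
      = 2 * Real.sqrt Real.pi / τ * Real.exp (-(τ * Real.sqrt s)) := by
  have key := integral_image_eq_integral_abs_deriv_smul (measurableSet_Ioi (a := (0:ℝ)))
    (f := fun x : ℝ => x^2) (f' := fun x => 2*x)
    (fun x _ => (sq_hasDeriv x).hasDerivWithinAt) sq_injOn
    (fun t => t ^ (-(3:ℝ)/2) * Real.exp (-(s*t) - τ^2/(4*t)))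
  rw [sq_image] at key
  rw [key, MeasureTheory.setIntegral_congr_fun measurableSet_Ioi (tkernel_eq s τ hs hτ),
    MeasureTheory.integral_const_mul,
    coreJ (Real.sqrt s) (τ/2) (Real.sqrt_pos.mpr hs) (by positivity)]
  rw [show 2*(Real.sqrt s * (τ/2)) = τ * Real.sqrt s by ring]
  field_simp

lemma lapkernel_int (s τ : ℝ) (hs : 0 < s) (hτ : 0 < τ) :
    MeasureTheory.IntegrableOn (fun t => t ^ (-(3:ℝ)/2) * Real.exp (-(s*t) - τ^2/(4*t)))
      (Set.Ioi (0:ℝ)) := by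
  have key := (integrableOn_image_iff_integrableOn_abs_deriv_smul (measurableSet_Ioi (a := (0:ℝ)))
    (f := fun x : ℝ => x^2) (f' := fun x => 2*x)
    (fun x _ => (sq_hasDeriv x).hasDerivWithinAt) sq_injOn
    (fun t => t ^ (-(3:ℝ)/2) * Real.exp (-(s*t) - τ^2/(4*t))))
  rw [sq_image] at key
  apply key.mpr
  have h := ((coreJ_int (Real.sqrt s) (τ/2) (Real.sqrt_pos.mpr hs) (by positivity)).const_mul 2)
  exact MeasureTheory.IntegrableOn.congr_fun h
    (fun x hx => ((tkernel_eq s τ hs hτ x hx).symm)) measurableSet_Ioi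

end part4

section part5

noncomputable def Kker (n : ℕ) (c t : ℝ) : ℝ :=
  ∫ τ in Set.Ioi c, Real.exp (-τ^2/(4*t)) * τ * (τ - c)^(n-1)

noncomputable def Hfun (n : ℕ) (c s : ℝ) : ℝ → ℝ → ℝ :=
  fun τ t => Real.exp (-(s*t)) * t ^ (-(3:ℝ)/2) * (Real.exp (-τ^2/(4*t)) * τ * (τ - c)^(n-1))

lemma shift_integral (c : ℝ) (f : ℝ → ℝ) :
    ∫ τ in Set.Ioi c, f τ = ∫ u in Set.Ioi 0, f (u + c) := by
  have h := (measurePreserving_add_right volume c).setIntegral_preimage_emb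
    (measurableEmbedding_addRight c) f (Set.Ioi c)
  rw [← h]
  congr 1
  ext u
  simp

lemma shift_integrableOn (c : ℝ) (f : ℝ → ℝ) :
    IntegrableOn f (Set.Ioi c) ↔ IntegrableOn (fun u => f (u+c)) (Set.Ioi 0) := by
  have h := (measurePreserving_add_right volume c).integrableOn_comp_preimage
    (measurableEmbedding_addRight c) (f := f) (s := Set.Ioi c)
  rw [← h]
  have h2 : ((· + c) ⁻¹' Set.Ioi c) = Set.Ioi 0 := by ext u; simp
  rw [h2]
  rfl

lemma pow_exp_integrableOn (n : ℕ) (hn : 1 ≤ n) (b : ℝ) (hb : 0 < b) :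
    IntegrableOn (fun u : ℝ => u ^ (n-1) * Real.exp (-(b*u))) (Set.Ioi 0) := by
  have h := integrableOn_rpow_mul_exp_neg_mul_rpow (p := 1) (s := ((n:ℝ)-1)) (by
    have : (1:ℝ) ≤ (n:ℝ) := by exact_mod_cast hn
    linarith) one_pos hb
  apply h.congr_fun ?_ measurableSet_Ioi
  intro x hx
  simp only [Set.mem_Ioi] at hx
  have e1 : x ^ (1:ℝ) = x := Real.rpow_one x
  have e2 : x ^ ((n:ℝ)-1) = x ^ (n-1:ℕ) := by
    rw [← Real.rpow_natCast x (n-1)]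
    congr 1
    push_cast [hn]
    ring
  simp only [e1, e2]
  ring

lemma tau_integrableOn (n : ℕ) (hn : 1 ≤ n) (b c : ℝ) (hb : 0 < b) :
    IntegrableOn (fun τ => (τ - c)^(n-1) * Real.exp (-(b*τ))) (Set.Ioi c) := by
  rw [shift_integrableOn]
  have h := (pow_exp_integrableOn n hn b hb).const_mul (Real.exp (-(b*c)))
  apply MeasureTheory.IntegrableOn.congr_fun h ?_ measurableSet_Ioi
  intro u _
  simp only [add_sub_cancel_right]
  rw [show -(b*(u+c)) = -(b*c) + -(b*u) by ring, Real.exp_add]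
  ring

lemma tau_integral (n : ℕ) (hn : 1 ≤ n) (b c : ℝ) (hb : 0 < b) :
    ∫ τ in Set.Ioi c, (τ - c)^(n-1) * Real.exp (-(b*τ))
      = Real.exp (-(b*c)) * ((1/b)^n * (Nat.factorial (n-1) : ℝ)) := by
  rw [shift_integral]
  have step1 : ∫ u in Set.Ioi (0:ℝ), (u + c - c)^(n-1) * Real.exp (-(b*(u+c)))
      = ∫ u in Set.Ioi (0:ℝ), Real.exp (-(b*c)) * (u ^ ((n:ℝ)-1) * Real.exp (-(b*u))) := by
    apply MeasureTheory.setIntegral_congr_fun measurableSet_Ioi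
    intro u hu
    simp only [Set.mem_Ioi] at hu
    have e2 : u ^ ((n:ℝ)-1) = u ^ (n-1:ℕ) := by
      rw [← Real.rpow_natCast u (n-1)]
      congr 1
      push_cast [hn]
      ring
    simp only [add_sub_cancel_right, e2]
    rw [show -(b*(u+c)) = -(b*c) + -(b*u) by ring, Real.exp_add]
    ring
  rw [step1, MeasureTheory.integral_const_mul,
    Real.integral_rpow_mul_exp_neg_mul_Ioi (by exact_mod_cast hn.trans_lt' Nat.zero_lt_one) hb]
  congr 1
  have hΓ : Real.Gamma (n:ℝ) = (Nat.factorial (n-1) : ℝ) := by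
    have h1 : (n:ℝ) = ((n-1:ℕ):ℝ) + 1 := by push_cast [hn]; ring
    rw [h1, Real.Gamma_nat_eq_factorial]
  rw [hΓ, ← Real.rpow_natCast (1/b) n]

lemma H_t_eq (n : ℕ) (c s τ t : ℝ) :
    Hfun n c s τ t
      = (τ * (τ - c)^(n-1)) * (t ^ (-(3:ℝ)/2) * Real.exp (-(s*t) - τ^2/(4*t))) := by
  unfold Hfun
  rw [show -(s*t) - τ^2/(4*t) = -(s*t) + -(τ^2/(4*t)) by ring, Real.exp_add,
    show (-τ^2/(4*t) : ℝ) = -(τ^2/(4*t)) by ring]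
  ring

lemma H_t_int (n : ℕ) (c s : ℝ) (hs : 0 < s) (hc : 0 ≤ c) {τ : ℝ} (hτ : τ ∈ Set.Ioi c) :
    IntegrableOn (fun t => Hfun n c s τ t) (Set.Ioi (0:ℝ)) := by
  simp only [Set.mem_Ioi] at hτ
  have hτ0 : 0 < τ := lt_of_le_of_lt hc hτ
  have h := (lapkernel_int s τ hs hτ0).const_mul (τ * (τ - c)^(n-1))
  exact MeasureTheory.IntegrableOn.congr_fun h
    (fun t _ => (H_t_eq n c s τ t).symm) measurableSet_Ioi

lemma H_t_val (n : ℕ) (c s : ℝ) (hs : 0 < s) (hc : 0 ≤ c) {τ : ℝ} (hτ : τ ∈ Set.Ioi c) :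
    ∫ t in Set.Ioi (0:ℝ), Hfun n c s τ t
      = 2 * Real.sqrt Real.pi * ((τ - c)^(n-1) * Real.exp (-(Real.sqrt s * τ))) := by
  simp only [Set.mem_Ioi] at hτ
  have hτ0 : 0 < τ := lt_of_le_of_lt hc hτ
  rw [MeasureTheory.setIntegral_congr_fun measurableSet_Ioi
    (fun t (_ : t ∈ Set.Ioi (0:ℝ)) => H_t_eq n c s τ t),
    MeasureTheory.integral_const_mul, lapkernel s τ hs hτ0,
    show τ * Real.sqrt s = Real.sqrt s * τ from mul_comm _ _]
  field_simp

lemma H_meas (n : ℕ) (c s : ℝ) : Measurable (Function.uncurry (Hfun n c s)) := by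
  unfold Function.uncurry Hfun
  fun_prop

lemma H_nonneg (n : ℕ) (c s : ℝ) (hc : 0 ≤ c) {τ t : ℝ} (hτ : c < τ) (ht : 0 < t) :
    0 ≤ Hfun n c s τ t := by
  have hτ0 : 0 < τ := lt_of_le_of_lt hc hτ
  have h1 : (0:ℝ) ≤ t ^ (-(3:ℝ)/2) := Real.rpow_nonneg ht.le _
  have h2 : (0:ℝ) ≤ (τ - c)^(n-1) := pow_nonneg (by linarith) _
  unfold Hfun
  positivity

lemma H_prod_int (n : ℕ) (hn : 1 ≤ n) (c s : ℝ) (hs : 0 < s) (hc : 0 ≤ c) :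
    Integrable (Function.uncurry (Hfun n c s))
      ((volume.restrict (Set.Ioi c)).prod (volume.restrict (Set.Ioi (0:ℝ)))) := by
  apply (MeasureTheory.integrable_prod_iff
    (H_meas n c s).aestronglyMeasurable).mpr
  constructor
  · apply (MeasureTheory.ae_restrict_iff' measurableSet_Ioi).mpr
    exact MeasureTheory.ae_of_all _ (fun τ hτ => H_t_int n c s hs hc hτ)
  · have key : ∀ τ ∈ Set.Ioi c, (∫ t in Set.Ioi (0:ℝ), ‖Hfun n c s τ t‖)
        = 2 * Real.sqrt Real.pi * ((τ - c)^(n-1) * Real.exp (-(Real.sqrt s * τ))) := by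
      intro τ hτ
      rw [MeasureTheory.setIntegral_congr_fun measurableSet_Ioi
        (fun t ht => Real.norm_of_nonneg (H_nonneg n c s hc hτ ht))]
      exact H_t_val n c s hs hc hτ
    have h := (tau_integrableOn n hn (Real.sqrt s) c (Real.sqrt_pos.mpr hs)).const_mul
      (2 * Real.sqrt Real.pi)
    apply MeasureTheory.IntegrableOn.congr_fun h ?_ measurableSet_Ioi
    intro τ hτ
    exact (key τ hτ).symm

lemma real_laplace (n : ℕ) (hn : 1 ≤ n) (c : ℝ) (hc : 0 < c) (s : ℝ) (hs : 0 < s) :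
    ∫ t in Set.Ioi (0:ℝ), Real.exp (-(s*t)) *
        (t ^ (-(3:ℝ)/2) / (2 * Real.sqrt Real.pi * (Nat.factorial (n-1) : ℝ)) * Kker n c t)
      = Real.exp (-(c * Real.sqrt s)) / (Real.sqrt s)^n := by
  have hπ : 0 < Real.sqrt Real.pi := Real.sqrt_pos.mpr Real.pi_pos
  have hfac : (0:ℝ) < (Nat.factorial (n-1) : ℝ) := by
    exact_mod_cast Nat.factorial_pos (n-1)
  have hb : 0 < Real.sqrt s := Real.sqrt_pos.mpr hs
  have hinner : ∀ t : ℝ, ∫ τ in Set.Ioi c, Hfun n c s τ t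
      = Real.exp (-(s*t)) * t ^ (-(3:ℝ)/2) * Kker n c t := by
    intro t
    unfold Hfun Kker
    rw [MeasureTheory.integral_const_mul]
  have hswap := MeasureTheory.integral_integral_swap (f := Hfun n c s)
    (H_prod_int n hn c s hs hc.le)
  calc ∫ t in Set.Ioi (0:ℝ), Real.exp (-(s*t)) *
        (t ^ (-(3:ℝ)/2) / (2 * Real.sqrt Real.pi * (Nat.factorial (n-1) : ℝ)) * Kker n c t)
      = ∫ t in Set.Ioi (0:ℝ), (2 * Real.sqrt Real.pi * (Nat.factorial (n-1) : ℝ))⁻¹ *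
          (∫ τ in Set.Ioi c, Hfun n c s τ t) := by
        apply MeasureTheory.setIntegral_congr_fun measurableSet_Ioi
        intro t _
        dsimp only
        rw [hinner t]
        ring
    _ = (2 * Real.sqrt Real.pi * (Nat.factorial (n-1) : ℝ))⁻¹ *
          ∫ t in Set.Ioi (0:ℝ), ∫ τ in Set.Ioi c, Hfun n c s τ t := by
        rw [MeasureTheory.integral_const_mul]
    _ = (2 * Real.sqrt Real.pi * (Nat.factorial (n-1) : ℝ))⁻¹ *
          ∫ τ in Set.Ioi c, ∫ t in Set.Ioi (0:ℝ), Hfun n c s τ t := by rw [← hswap]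
    _ = (2 * Real.sqrt Real.pi * (Nat.factorial (n-1) : ℝ))⁻¹ *
          ∫ τ in Set.Ioi c, 2 * Real.sqrt Real.pi *
            ((τ - c)^(n-1) * Real.exp (-(Real.sqrt s * τ))) := by
        congr 1
        exact MeasureTheory.setIntegral_congr_fun measurableSet_Ioi
          (fun τ hτ => H_t_val n c s hs hc.le hτ)
    _ = (2 * Real.sqrt Real.pi * (Nat.factorial (n-1) : ℝ))⁻¹ *
          (2 * Real.sqrt Real.pi * (Real.exp (-(Real.sqrt s * c)) *
            ((1/Real.sqrt s)^n * (Nat.factorial (n-1) : ℝ)))) := by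
        rw [MeasureTheory.integral_const_mul, tau_integral n hn (Real.sqrt s) c hb]
    _ = Real.exp (-(c * Real.sqrt s)) / (Real.sqrt s)^n := by
        rw [show Real.sqrt s * c = c * Real.sqrt s from mul_comm _ _]
        field_simp
        ring_nf
        rw [← mul_pow, mul_inv_cancel₀ hb.ne', one_pow]

end part5

noncomputable def gfun (n : ℕ) (c t : ℝ) : ℝ :=
  t ^ (-(3:ℝ)/2) / (2 * Real.sqrt Real.pi * (Nat.factorial (n-1) : ℝ)) * Kker n c t

lemma Kker_meas (n : ℕ) (c : ℝ) : Measurable (Kker n c) := by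
  have h : Measurable fun p : ℝ × ℝ => Real.exp (-p.2^2/(4*p.1)) * p.2 * (p.2-c)^(n-1) := by
    fun_prop
  exact (h.stronglyMeasurable.integral_prod_right').measurable

lemma gfun_meas (n : ℕ) (c : ℝ) : Measurable (gfun n c) := by
  unfold gfun
  apply Measurable.mul _ (Kker_meas n c)
  fun_prop

lemma Kker_nonneg (n : ℕ) {c : ℝ} (hc : 0 ≤ c) (t : ℝ) : 0 ≤ Kker n c t := by
  apply MeasureTheory.setIntegral_nonneg measurableSet_Ioi
  intro τ hτ
  simp only [Set.mem_Ioi] at hτ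
  have h1 : 0 < τ := lt_of_le_of_lt hc hτ
  have h2 : (0:ℝ) ≤ (τ - c)^(n-1) := pow_nonneg (by linarith) _
  positivity

lemma gfun_nonneg (n : ℕ) {c : ℝ} (hc : 0 ≤ c) {t : ℝ} (ht : 0 < t) : 0 ≤ gfun n c t := by
  unfold gfun
  have h1 : (0:ℝ) ≤ t ^ (-(3:ℝ)/2) := Real.rpow_nonneg ht.le _
  have h2 := Kker_nonneg n hc t
  have h3 : (0:ℝ) < (Nat.factorial (n-1) : ℝ) := by exact_mod_cast Nat.factorial_pos _
  have h4 : (0:ℝ) < Real.sqrt Real.pi := Real.sqrt_pos.mpr Real.pi_pos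
  positivity


lemma Hfun_inner (n : ℕ) (c s t : ℝ) :
    ∫ τ in Set.Ioi c, Hfun n c s τ t
      = Real.exp (-(s*t)) * t ^ (-(3:ℝ)/2) * Kker n c t := by
  unfold Hfun Kker
  rw [MeasureTheory.integral_const_mul]

lemma gInt (n : ℕ) (hn : 1 ≤ n) (c : ℝ) (hc : 0 < c) (s : ℝ) (hs : 0 < s) :
    IntegrableOn (fun t => Real.exp (-(s*t)) * gfun n c t) (Set.Ioi (0:ℝ)) := by
  have h0 := (H_prod_int n hn c s hs hc.le).swap.integral_prod_left
  have h : Integrable (fun t => ∫ τ in Set.Ioi c, Hfun n c s τ t)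
      (volume.restrict (Set.Ioi (0:ℝ))) := h0
  have h2 := h.const_mul ((2 * Real.sqrt Real.pi * (Nat.factorial (n-1):ℝ))⁻¹)
  apply MeasureTheory.IntegrableOn.congr_fun h2 ?_ measurableSet_Ioi
  intro t _
  dsimp only
  rw [Hfun_inner]
  unfold gfun
  ring

noncomputable def Phi (n : ℕ) (c : ℝ) (q : ℂ) : ℂ :=
  ∫ t in Set.Ioi (0:ℝ), Complex.exp (-q * t) * ((gfun n c t : ℝ) : ℂ)

noncomputable def Psi (n : ℕ) (c : ℝ) (q : ℂ) : ℂ :=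
  Complex.exp (-(c:ℂ) * q ^ (1/2:ℂ)) / q ^ ((n:ℂ)/2)

lemma Phi_meas_integrand (n : ℕ) (c : ℝ) (q : ℂ) :
    AEStronglyMeasurable (fun t : ℝ => Complex.exp (-q * t) * ((gfun n c t : ℝ):ℂ))
      (volume.restrict (Set.Ioi (0:ℝ))) := by
  apply Measurable.aestronglyMeasurable
  apply Measurable.mul
  · exact Complex.measurable_exp.comp (Complex.measurable_ofReal.const_mul (-q))
  · exact Complex.measurable_ofReal.comp (gfun_meas n c)

lemma Phi_norm (n : ℕ) {c : ℝ} (hc : 0 < c) (q : ℂ) {t : ℝ} (ht : 0 < t) :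
    ‖Complex.exp (-q * t) * ((gfun n c t : ℝ):ℂ)‖ = Real.exp (-(q.re * t)) * gfun n c t := by
  rw [norm_mul, Complex.norm_exp, Complex.norm_real,
    Real.norm_eq_abs, abs_of_nonneg (gfun_nonneg n hc.le ht)]
  congr 2
  simp [Complex.mul_re]

lemma Phi_int (n : ℕ) (hn : 1 ≤ n) {c : ℝ} (hc : 0 < c) (q : ℂ) (hq : 0 < q.re) :
    Integrable (fun t : ℝ => Complex.exp (-q * t) * ((gfun n c t : ℝ):ℂ))
      (volume.restrict (Set.Ioi (0:ℝ))) := by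
  apply Integrable.mono' (gInt n hn c hc q.re hq) (Phi_meas_integrand n c q)
  apply (MeasureTheory.ae_restrict_iff' measurableSet_Ioi).mpr
  apply MeasureTheory.ae_of_all
  intro t ht
  rw [Phi_norm n hc q ht]

lemma Phi_diff (n : ℕ) (hn : 1 ≤ n) {c : ℝ} (hc : 0 < c) :
    DifferentiableOn ℂ (Phi n c) {q : ℂ | 0 < q.re} := by
  intro q₀ hq₀mem
  have hq₀ : 0 < q₀.re := hq₀mem
  set δ : ℝ := q₀.re/2 with hδdef
  have hδ : 0 < δ := by positivity
  have key := hasDerivAt_integral_of_dominated_loc_of_deriv_le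
    (μ := volume.restrict (Set.Ioi (0:ℝ)))
    (F := fun (q : ℂ) (t : ℝ) => Complex.exp (-q * t) * ((gfun n c t : ℝ):ℂ))
    (F' := fun (q : ℂ) (t : ℝ) => (-(t:ℂ)) * (Complex.exp (-q * t) * ((gfun n c t : ℝ):ℂ)))
    (x₀ := q₀) (s := Metric.ball q₀ δ)
    (bound := fun t => (2/δ) * (Real.exp (-(δ/2 * t)) * gfun n c t))
    (Metric.ball_mem_nhds q₀ hδ)
    (Filter.Eventually.of_forall (fun q => Phi_meas_integrand n c q))
    (Phi_int n hn hc q₀ hq₀)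
    (((Complex.measurable_ofReal.neg).mul ((Complex.measurable_exp.comp
        (Complex.measurable_ofReal.const_mul (-q₀))).mul
        (Complex.measurable_ofReal.comp (gfun_meas n c)))).aestronglyMeasurable)
    ?_ ?_ ?_
  · exact (key.2.differentiableAt).differentiableWithinAt
  · -- bound
    apply (MeasureTheory.ae_restrict_iff' measurableSet_Ioi).mpr
    apply MeasureTheory.ae_of_all
    intro t ht q hqball
    simp only [Set.mem_Ioi] at ht
    have hgnn := gfun_nonneg n hc.le ht
    have hre : δ ≤ q.re := by
      have h1 : |(q - q₀).re| ≤ ‖q - q₀‖ := Complex.abs_re_le_norm _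
      have h2 : ‖q - q₀‖ < δ := by
        rw [← Complex.dist_eq]
        exact Metric.mem_ball.mp hqball
      have h3 := abs_lt.mp (lt_of_le_of_lt h1 h2)
      have h4 : (q - q₀).re = q.re - q₀.re := by simp [Complex.sub_re]
      rw [h4] at h3
      have := h3.1
      rw [hδdef] at *
      linarith
    rw [norm_mul,
      show ‖(-(t:ℂ))‖ = t by
        rw [norm_neg, Complex.norm_real, Real.norm_eq_abs, abs_of_pos ht],
      Phi_norm n hc q ht]
    have hexp1 : Real.exp (-(q.re*t)) ≤ Real.exp (-(δ*t)) := by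
      apply Real.exp_le_exp.mpr
      nlinarith
    have h6 : t ≤ (2/δ) * Real.exp ((δ/2)*t) := by
      have h5 : (δ/2)*t ≤ Real.exp ((δ/2)*t) :=
        le_trans (by linarith [Real.add_one_le_exp ((δ/2)*t)]) le_rfl
      calc t = (2/δ)*((δ/2)*t) := by field_simp
        _ ≤ (2/δ)*Real.exp ((δ/2)*t) := mul_le_mul_of_nonneg_left h5 (by positivity)
    have hkey : t * Real.exp (-(δ*t)) ≤ (2/δ) * Real.exp (-(δ/2*t)) := by
      calc t * Real.exp (-(δ*t))
          ≤ ((2/δ)*Real.exp ((δ/2)*t)) * Real.exp (-(δ*t)) :=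
            mul_le_mul_of_nonneg_right h6 (Real.exp_nonneg _)
        _ = (2/δ) * Real.exp (-(δ/2*t)) := by
            rw [mul_assoc, ← Real.exp_add]
            congr 2
            ring
    calc t * (Real.exp (-(q.re*t)) * gfun n c t)
        ≤ t * (Real.exp (-(δ*t)) * gfun n c t) :=
          mul_le_mul_of_nonneg_left (mul_le_mul_of_nonneg_right hexp1 hgnn) ht.le
      _ = (t * Real.exp (-(δ*t))) * gfun n c t := by ring
      _ ≤ ((2/δ) * Real.exp (-(δ/2*t))) * gfun n c t := mul_le_mul_of_nonneg_right hkey hgnn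
      _ = 2/δ * (Real.exp (-(δ/2*t)) * gfun n c t) := by ring
  · exact ((gInt n hn c hc (δ/2) (by positivity)).const_mul (2/δ))
  · -- differentiability
    apply MeasureTheory.ae_of_all
    intro t q _
    have h1 : HasDerivAt (fun q : ℂ => -q * t) (-(t:ℂ)) q := by
      simpa using ((hasDerivAt_id q).neg.mul_const (t:ℂ))
    have h2 := (h1.cexp).mul_const ((gfun n c t : ℝ):ℂ)
    show HasDerivAt _ ((-(t:ℂ)) * (Complex.exp (-q * t) * ((gfun n c t : ℝ):ℂ))) q
    have e : (-(t:ℂ)) * (Complex.exp (-q * t) * ((gfun n c t : ℝ):ℂ))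
        = Complex.exp (-q * t) * -(t:ℂ) * ((gfun n c t : ℝ):ℂ) := by ring
    rw [e]
    exact h2

lemma Psi_diff (n : ℕ) (c : ℝ) : DifferentiableOn ℂ (Psi n c) {q : ℂ | 0 < q.re} := by
  intro q hq
  apply DifferentiableAt.differentiableWithinAt
  have hslit : q ∈ Complex.slitPlane := Or.inl hq
  have hq0 : q ≠ 0 := Complex.slitPlane_ne_zero hslit
  have h1 : DifferentiableAt ℂ (fun q : ℂ => q ^ (1/2:ℂ)) q :=
    DifferentiableAt.cpow differentiableAt_id (differentiableAt_const _) hslit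
  have h2 : DifferentiableAt ℂ (fun q : ℂ => q ^ ((n:ℂ)/2)) q :=
    DifferentiableAt.cpow differentiableAt_id (differentiableAt_const _) hslit
  apply DifferentiableAt.div
  · exact (h1.const_mul (-(c:ℂ))).cexp
  · exact h2
  · simp only [ne_eq, Complex.cpow_eq_zero_iff, not_and_or, not_not]
    exact Or.inl hq0

lemma match_real (n : ℕ) (hn : 1 ≤ n) {c : ℝ} (hc : 0 < c) (s : ℝ) (hs : 0 < s) :
    Phi n c (s:ℂ) = Psi n c (s:ℂ) := by
  have hb : 0 < Real.sqrt s := Real.sqrt_pos.mpr hs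
  have hPhi : Phi n c (s:ℂ) = ((Real.exp (-(c * Real.sqrt s)) / (Real.sqrt s)^n : ℝ) : ℂ) := by
    unfold Phi
    have hpt : ∀ t ∈ Set.Ioi (0:ℝ), Complex.exp (-(s:ℂ) * t) * ((gfun n c t : ℝ):ℂ)
        = ((Real.exp (-(s*t)) * gfun n c t : ℝ) : ℂ) := by
      intro t _
      rw [Complex.ofReal_mul, Complex.ofReal_exp]
      congr 2
      push_cast
      ring
    rw [MeasureTheory.setIntegral_congr_fun measurableSet_Ioi hpt]
    rw [show (fun x : ℝ => ((Real.exp (-(s*x)) * gfun n c x : ℝ) : ℂ))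
        = fun x : ℝ => ((Real.exp (-(s*x)) * gfun n c x : ℝ) : ℂ) from rfl]
    rw [← real_laplace n hn c hc s hs]
    exact integral_ofReal
  have h12 : (s:ℂ) ^ (1/2:ℂ) = ((Real.sqrt s : ℝ) : ℂ) := by
    rw [show ((1:ℂ)/2) = (((1/2 : ℝ)):ℂ) by norm_num, ← Complex.ofReal_cpow hs.le,
      ← Real.sqrt_eq_rpow]
  have h22 : (s:ℂ) ^ ((n:ℂ)/2) = (((Real.sqrt s)^n : ℝ) : ℂ) := by
    rw [show ((n:ℂ)/2) = ((((n:ℝ)/2 : ℝ)):ℂ) by push_cast; ring, ← Complex.ofReal_cpow hs.le]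
    congr 1
    rw [Real.sqrt_eq_rpow, ← Real.rpow_natCast (s ^ (1/(2:ℝ))) n, ← Real.rpow_mul hs.le]
    congr 1
    ring
  rw [hPhi]
  unfold Psi
  rw [h12, h22, show -(c:ℂ) * ((Real.sqrt s : ℝ):ℂ) = ((-(c * Real.sqrt s) : ℝ) : ℂ) by
    push_cast; ring, ← Complex.ofReal_exp, ← Complex.ofReal_div]

lemma Phi_eq_Psi (n : ℕ) (hn : 1 ≤ n) {c : ℝ} (hc : 0 < c) {q : ℂ} (hq : 0 < q.re) :
    Phi n c q = Psi n c q := by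
  have hUopen : IsOpen {q : ℂ | 0 < q.re} := isOpen_lt continuous_const Complex.continuous_re
  have hUconn : IsPreconnected {q : ℂ | 0 < q.re} := (convex_halfSpace_re_gt (0:ℝ)).isPreconnected
  have hPhiA : AnalyticOnNhd ℂ (Phi n c) {q : ℂ | 0 < q.re} :=
    (Phi_diff n hn hc).analyticOnNhd hUopen
  have hPsiA : AnalyticOnNhd ℂ (Psi n c) {q : ℂ | 0 < q.re} :=
    (Psi_diff n c).analyticOnNhd hUopen
  have h1U : (1:ℂ) ∈ {q : ℂ | 0 < q.re} := by
    simp only [Set.mem_setOf_eq, Complex.one_re]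
    norm_num
  have hseq : Filter.Tendsto (fun k : ℕ => ((1 + ((k:ℝ)+1)⁻¹ : ℝ) : ℂ)) Filter.atTop
      (nhdsWithin 1 {(1:ℂ)}ᶜ) := by
    apply tendsto_nhdsWithin_of_tendsto_nhds_of_eventually_within
    · have h0 : Filter.Tendsto (fun k : ℕ => (1 + ((k:ℝ)+1)⁻¹ : ℝ)) Filter.atTop (nhds 1) := by
        have h1 : Filter.Tendsto (fun n : ℕ => 1 / ((n : ℝ) + 1)) Filter.atTop (nhds 0) :=
          tendsto_one_div_add_atTop_nhds_zero_nat
        have h2 := h1.const_add (1:ℝ)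
        simpa [one_div] using h2
      have h3 := (Complex.continuous_ofReal.tendsto (1:ℝ)).comp h0
      exact h3
    · apply Filter.Eventually.of_forall
      intro k
      simp only [Set.mem_compl_iff, Set.mem_singleton_iff]
      intro hcontra
      have h4 : (1 + ((k:ℝ)+1)⁻¹) = 1 := by exact_mod_cast hcontra
      have h5 : (0:ℝ) < ((k:ℝ)+1)⁻¹ := by positivity
      linarith
  have hfreq : ∃ᶠ z in nhdsWithin 1 {(1:ℂ)}ᶜ, Phi n c z = Psi n c z := by
    apply hseq.frequently
    apply Filter.Frequently.of_forall
    intro k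
    exact match_real n hn hc _ (by positivity)
  exact hPhiA.eqOn_of_preconnected_of_frequently_eq hPsiA hUconn h1U hfreq hq


/-- The Laplace transform of
`t ↦ t^{-3/2}/(2√π (n-1)!) ∫_c^∞ e^{-τ²/(4t)} τ (τ-c)^{n-1} dτ`, with `c = D log k > 0`, is
`q ↦ e^{-c q^{1/2}}/q^{n/2} = k^{-D q^{1/2}}/q^{n/2}` on the right half-plane (principal
branch of the square root). -/
theorem laplace_transform_phi_kernel
    (n : ℕ) (hn : 1 ≤ n) (k D : ℝ)
    (hkD : (1 < k ∧ 0 < D) ∨ (0 < k ∧ k < 1 ∧ D < 0))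
    (c : ℝ) (hc : c = D * Real.log k)
    (q : ℂ) (hq : 0 < q.re) :
    ∫ t in Set.Ioi (0 : ℝ),
        Complex.exp (-q * t) *
          ((t ^ (-(3 : ℝ) / 2) / (2 * Real.sqrt Real.pi * (Nat.factorial (n - 1) : ℝ)) *
              ∫ τ in Set.Ioi c, Real.exp (-τ ^ 2 / (4 * t)) * τ * (τ - c) ^ (n - 1) : ℝ) : ℂ)
      = Complex.exp (-(c : ℂ) * q ^ (1 / 2 : ℂ)) / q ^ ((n : ℂ) / 2) := by
  have hc0 : 0 < c := by
    rcases hkD with ⟨hk, hD⟩ | ⟨hk0, hk1, hD⟩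
    · rw [hc]
      exact mul_pos hD (Real.log_pos hk)
    · rw [hc]
      exact mul_pos_of_neg_of_neg hD (Real.log_neg hk0 hk1)
  have h := Phi_eq_Psi n hn hc0 hq
  unfold Phi Psi gfun Kker at h
  exact h
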